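/- arXiv:1510.08736 — 2 statements merged into one kernel-verified Lean document; each statement's English description precedes it below -/
import Mathlib

section
/- Let g : ℝ^{NM} → ℝ be differentiable with (∇g(x)−∇g(y))ᵀ(x−y) ≥ m‖x−y‖₂², let W be a positive definite diagonal matrix with smallest diagonal entry d_min > 0, and suppose x and x' satisfy ∇g(x) + 2ρWx + s = ∇g(x') + 2ρWx' where ‖s‖₂ ≤ S. Then ‖x − x'‖₂ ≤ S/(m + 2ρ d_min). -/
open scoped RealInnerProductSpace

/-- Perturbation bound: if `∇g(x) + 2ρWx + s = ∇g(x') + 2ρWx'` with `g` strongly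
convex (constant `m`), `W` positive definite diagonal with smallest entry
`d_min`, and `‖s‖ ≤ S`, then `‖x − x'‖ ≤ S/(m + 2ρ d_min)`. -/
theorem stmt_13 {n : ℕ} (ρ m dmin S : ℝ) (hρ : 0 < ρ) (hm : 0 < m) (hdmin : 0 < dmin)
    (g : EuclideanSpace ℝ (Fin n) → ℝ)
    (Dg : EuclideanSpace ℝ (Fin n) → EuclideanSpace ℝ (Fin n))
    (hgrad : ∀ x, HasGradientAt g (Dg x) x)
    (hsc : ∀ x y, m * ‖x - y‖ ^ 2 ≤ ⟪Dg x - Dg y, x - y⟫)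
    (d : Fin n → ℝ) (hd : ∀ i, dmin ≤ d i)
    (x x' s : EuclideanSpace ℝ (Fin n)) (hS : ‖s‖ ≤ S)
    (heq : Dg x + (2 * ρ) • ((WithLp.equiv 2 (Fin n → ℝ)).symm fun i => d i * x i) + s =
      Dg x' + (2 * ρ) • ((WithLp.equiv 2 (Fin n → ℝ)).symm fun i => d i * x' i)) :
    ‖x - x'‖ ≤ S / (m + 2 * ρ * dmin) := by
  set v := x - x' with hv
  set Wx : EuclideanSpace ℝ (Fin n) := (WithLp.equiv 2 (Fin n → ℝ)).symm fun i => d i * x i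
  set Wx' : EuclideanSpace ℝ (Fin n) := (WithLp.equiv 2 (Fin n → ℝ)).symm fun i => d i * x' i
  have h2 : (-s : EuclideanSpace ℝ (Fin n)) = (Dg x - Dg x') + (2*ρ) • (Wx - Wx') := by
    linear_combination (norm := module) -heq
  have h3 : ⟪-s, v⟫ = ⟪Dg x - Dg x', v⟫ + (2*ρ) * ⟪Wx - Wx', v⟫ := by
    rw [h2, inner_add_left, real_inner_smul_left]
  have hnormsq : ‖v‖ ^ 2 = ∑ i, v i * v i := by
    rw [← real_inner_self_eq_norm_sq, PiLp.inner_apply]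
    simp only [RCLike.inner_apply, conj_trivial]
  have h4 : dmin * ‖v‖ ^ 2 ≤ ⟪Wx - Wx', v⟫ := by
    rw [hnormsq, Finset.mul_sum]
    simp only [PiLp.inner_apply, RCLike.inner_apply, conj_trivial]
    apply Finset.sum_le_sum
    intro i _
    have hvi : (Wx - Wx') i = d i * v i := by
      simp [Wx, Wx', hv, mul_sub]
    rw [hvi]
    have := hd i
    nlinarith [sq_nonneg (v i)]
  have h5 : ⟪-s, v⟫ ≤ ‖s‖ * ‖v‖ := by
    calc ⟪-s, v⟫ ≤ ‖(-s : EuclideanSpace ℝ (Fin n))‖ * ‖v‖ := real_inner_le_norm _ _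
    _ = ‖s‖ * ‖v‖ := by rw [norm_neg]
  have hsc' := hsc x x'
  have hkey : (m + 2 * ρ * dmin) * ‖v‖ ^ 2 ≤ S * ‖v‖ := by
    have : (m + 2 * ρ * dmin) * ‖v‖ ^ 2 ≤ ⟪-s, v⟫ := by
      rw [h3]; nlinarith
    have hvn : (0:ℝ) ≤ ‖v‖ := norm_nonneg _
    nlinarith
  have hpos : 0 < m + 2 * ρ * dmin := by positivity
  rcases eq_or_lt_of_le (norm_nonneg v) with h0 | h0
  · rw [← h0]
    exact div_nonneg (le_trans (norm_nonneg s) hS) hpos.le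
  · rw [le_div_iff₀ hpos]
    nlinarith
end

section
/- Let Gᵢ(x̃) = gᵢ(x̃) + ρ|𝒩ᵢ| x̃ᵀx̃ − cᵀx̃ with gᵢ convex differentiable, ρ > 0, and suppose x* minimizes Gᵢ(x̃) + αᵀx̃ over a box 𝒳 = {x : a ⪯ x ⪯ b}. If Gᵢ is Lipschitz continuous on 𝒳 with constant K and the l-th component of α satisfies α_l > K, then the l-th component of x* equals a_l; if α_l < −K then x*_l = b_l. -/
open scoped RealInnerProductSpace

/-- If the minimizer of `Gᵢ(x) + αᵀx` over a box has `α_l` exceeding the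
Lipschitz constant of `Gᵢ` (resp. below its negative), then its `l`-th
coordinate sits at the lower (resp. upper) boundary. -/
theorem stmt_17 {M : ℕ} (ρ : ℝ) (hρ : 0 < ρ) (deg : ℕ)
    (g : EuclideanSpace ℝ (Fin M) → ℝ)
    (hgconv : ConvexOn ℝ Set.univ g) (hgdiff : Differentiable ℝ g)
    (c α a b : EuclideanSpace ℝ (Fin M)) (hab : ∀ i, a i ≤ b i)
    (K : ℝ)
    (hLip : ∀ x y : EuclideanSpace ℝ (Fin M),
      (∀ i, a i ≤ x i ∧ x i ≤ b i) → (∀ i, a i ≤ y i ∧ y i ≤ b i) →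
      |(g x + ρ * deg * ⟪x, x⟫ - ⟪c, x⟫) - (g y + ρ * deg * ⟪y, y⟫ - ⟪c, y⟫)| ≤
        K * ‖x - y‖)
    (xstar : EuclideanSpace ℝ (Fin M))
    (hxstar : ∀ i, a i ≤ xstar i ∧ xstar i ≤ b i)
    (hmin : ∀ y : EuclideanSpace ℝ (Fin M), (∀ i, a i ≤ y i ∧ y i ≤ b i) →
      (g xstar + ρ * deg * ⟪xstar, xstar⟫ - ⟪c, xstar⟫) + ⟪α, xstar⟫ ≤
        (g y + ρ * deg * ⟪y, y⟫ - ⟪c, y⟫) + ⟪α, y⟫)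
    (l : Fin M) :
    (α l > K → xstar l = a l) ∧ (α l < -K → xstar l = b l) := by

  classical
  set s := xstar l with hs
  have key : ∀ t : ℝ, a l ≤ t → t ≤ b l →
      0 ≤ K * |t - s| + α l * (t - s) := by
    intro t hat htb
    set y : EuclideanSpace ℝ (Fin M) := xstar + EuclideanSpace.single l (t - s) with hy
    have hyi : ∀ i, y i = if i = l then t else xstar i := by
      intro i
      simp only [hy, PiLp.add_apply, EuclideanSpace.single_apply]
      split <;> rename_i h
      · subst h; rw [← hs]; ring
      · exact add_zero _
    have hyl : y l = t := by rw [hyi]; simp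
    have hymem : ∀ i, a i ≤ y i ∧ y i ≤ b i := by
      intro i
      rw [hyi]
      by_cases h : i = l
      · subst h; simpa using ⟨hat, htb⟩
      · simpa [h] using hxstar i
    have hnorm : ‖xstar - y‖ = |t - s| := by
      have : xstar - y = EuclideanSpace.single l (s - t) := by
        ext i
        simp only [hy, PiLp.sub_apply, PiLp.add_apply, EuclideanSpace.single_apply]
        split <;> ring
      rw [this, EuclideanSpace.norm_single, Real.norm_eq_abs, abs_sub_comm]
    have hinner : ⟪α, y⟫ = ⟪α, xstar⟫ + α l * (t - s) := by
      rw [hy, inner_add_right, EuclideanSpace.inner_single_right]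
      simp [mul_comm]
    have hm := hmin y hymem
    have hl := hLip xstar y hxstar hymem
    have hG : (g xstar + ρ * deg * ⟪xstar, xstar⟫ - ⟪c, xstar⟫)
        - (g y + ρ * deg * ⟪y, y⟫ - ⟪c, y⟫) ≥ -(K * |t - s|) := by
      rw [hnorm] at hl
      have := abs_le.mp hl
      linarith [this.1]
    rw [hinner] at hm
    linarith
  constructor
  · intro hα
    by_contra h
    have hlt : a l < s := lt_of_le_of_ne (hxstar l).1 (fun e => h e.symm)
    have := key (a l) le_rfl (hab l)
    have habs : |a l - s| = s - a l := by rw [abs_sub_comm]; exact abs_of_pos (by linarith)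
    rw [habs] at this
    nlinarith
  · intro hα
    by_contra h
    have hlt : s < b l := lt_of_le_of_ne (hxstar l).2 h
    have := key (b l) (hab l) le_rfl
    have habs : |b l - s| = b l - s := abs_of_pos (by linarith)
    rw [habs] at this
    nlinarith
end
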